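/- Let F be a field and let d ≥ 3 be an integer. Then no polynomial in F[x] of degree d is (d−1)-superirreducible over F. Equivalently: for every irreducible polynomial f ∈ F[x] of degree d, there exists a nonconstant polynomial g ∈ F[x] of degree at most d−1 such that the composition f(g(x)) is not irreducible in F[x]. -/

import Mathlib

open Polynomial

/-- A polynomial `f ∈ R[x]` is `k`-superirreducible over `R` if it is irreducible and
`f(g(x))` is irreducible for every nonconstant `g ∈ R[x]` of degree at most `k`. -/
def IsSuperirreducible (R : Type*) [CommRing R] [IsDomain R] (k : ℕ) (f : Polynomial R) : Prop :=
  Irreducible f ∧ ∀ g : Polynomial R, 0 < g.natDegree → g.natDegree ≤ k →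
    Irreducible (f.comp g)

theorem no_superirreducible_of_degree_over_field (F : Type*) [Field F] (d : ℕ) (hd : 3 ≤ d)
    (f : Polynomial F) (hf : f.natDegree = d) :
    ¬ IsSuperirreducible F (d - 1) f := by
  rintro ⟨hirr, hcomp⟩
  have hfd : f ≠ 0 := fun h => by simp [h] at hf; omega
  have hlc : f.coeff d ≠ 0 := by
    rw [← hf]; exact mt leadingCoeff_eq_zero.mp hfd
  -- the constant coefficient is nonzero since f is irreducible of degree ≥ 2
  have ha0 : f.coeff 0 ≠ 0 := by
    intro h0
    obtain ⟨q, hq⟩ := X_dvd_iff.mpr h0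
    have hq0 : q ≠ 0 := by rintro rfl; simp at hq; exact hfd hq
    rcases hirr.isUnit_or_isUnit hq with h | h
    · exact not_isUnit_X h
    · have hqd := natDegree_eq_zero_of_isUnit h
      have : f.natDegree = 1 + q.natDegree := by
        rw [hq, natDegree_mul X_ne_zero hq0, natDegree_X]
      omega
  -- the auxiliary polynomial g, of degree d - 1
  set S : Polynomial F := ∑ i ∈ Finset.range d, C (f.coeff i) * X ^ (d - 1 - i) with hS
  set g : Polynomial F := C (-(f.coeff d)⁻¹) * S with hg
  have hScoeff : S.coeff (d - 1) = f.coeff 0 := by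
    rw [hS, finset_sum_coeff]
    rw [Finset.sum_eq_single 0]
    · simp
    · intro i hi hine
      simp only [Finset.mem_range] at hi
      rw [coeff_C_mul, coeff_X_pow, if_neg (by omega), mul_zero]
    · intro h; exact absurd (Finset.mem_range.mpr (by omega)) h
  have hSdeg : S.natDegree = d - 1 := by
    refine le_antisymm ?_ ?_
    · refine natDegree_sum_le_of_forall_le _ _ fun i hi => ?_
      exact (natDegree_C_mul_X_pow_le _ _).trans (by omega)
    · exact le_natDegree_of_ne_zero (by rw [hScoeff]; exact ha0)
  have hgdeg : g.natDegree = d - 1 := by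
    rw [hg, natDegree_C_mul (by simpa using inv_ne_zero hlc), hSdeg]
  -- pass to the field K = F[x]/(f)
  haveI : Fact (Irreducible f) := ⟨hirr⟩
  set K := AdjoinRoot f with hK
  set A : K := AdjoinRoot.root f with hA
  have hA0 : aeval A f = 0 := by rw [hA, AdjoinRoot.aeval_eq, AdjoinRoot.mk_self]
  have hAne : A ≠ 0 := by
    intro h
    rw [h] at hA0
    rw [aeval_def, eval₂_at_zero] at hA0
    exact ha0 ((map_eq_zero_iff (algebraMap F K) (RingHom.injective _)).mp hA0)
  set B : K := A⁻¹ with hB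
  -- key computation : g(B) = A
  have hgB : aeval B g = A := by
    have key : A ^ (d - 1) * (∑ i ∈ Finset.range d,
        algebraMap F K (f.coeff i) * B ^ (d - 1 - i))
        = A ^ (d - 1) * (-(algebraMap F K (f.coeff d) * A)) := by
      rw [Finset.mul_sum]
      have h1 : ∀ i ∈ Finset.range d,
          A ^ (d - 1) * (algebraMap F K (f.coeff i) * B ^ (d - 1 - i))
          = algebraMap F K (f.coeff i) * A ^ i := by
        intro i hi
        simp only [Finset.mem_range] at hi
        have hpow : A ^ (d - 1) * B ^ (d - 1 - i) = A ^ i := by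
          rw [hB, inv_pow]
          have h := pow_sub₀ A hAne (show d - 1 - i ≤ d - 1 by omega)
          rw [show d - 1 - (d - 1 - i) = i by omega] at h
          exact h.symm
        calc A ^ (d - 1) * (algebraMap F K (f.coeff i) * B ^ (d - 1 - i))
            = algebraMap F K (f.coeff i) * (A ^ (d - 1) * B ^ (d - 1 - i)) := by ring
          _ = algebraMap F K (f.coeff i) * A ^ i := by rw [hpow]
      rw [Finset.sum_congr rfl h1]
      have h2 : ∑ i ∈ Finset.range (d + 1), algebraMap F K (f.coeff i) * A ^ i = 0 := by
        have := hA0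
        rw [aeval_eq_sum_range, hf] at this
        simpa [Algebra.smul_def] using this
      rw [Finset.sum_range_succ] at h2
      have h3 : ∑ i ∈ Finset.range d, algebraMap F K (f.coeff i) * A ^ i
          = -(algebraMap F K (f.coeff d) * A ^ d) := by linear_combination h2
      rw [h3]
      have h4 : A ^ (d - 1) * A = A ^ d := by
        rw [← pow_succ]
        congr 1
        omega
      rw [show A ^ (d - 1) * -(algebraMap F K (f.coeff d) * A)
          = -(algebraMap F K (f.coeff d) * (A ^ (d - 1) * A)) from by ring, h4]
    have hT : (∑ i ∈ Finset.range d, algebraMap F K (f.coeff i) * B ^ (d - 1 - i))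
        = -(algebraMap F K (f.coeff d) * A) :=
      mul_left_cancel₀ (pow_ne_zero _ hAne) key
    rw [hg, hS]
    simp only [map_mul, map_sum, aeval_C, map_pow, aeval_X, map_neg]
    rw [hT]
    have hlcK : algebraMap F K (f.coeff d) ≠ 0 :=
      fun h => hlc ((map_eq_zero_iff (algebraMap F K) (RingHom.injective _)).mp h)
    field_simp
    rw [neg_mul_neg, map_div₀, map_one, ← mul_assoc, one_div_mul_cancel hlcK, one_mul]
  -- B is a root of f ∘ g
  have hroot : aeval B (f.comp g) = 0 := by rw [aeval_comp, hgB, hA0]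
  haveI : FiniteDimensional F K := (AdjoinRoot.powerBasis hfd).finite
  have hint : IsIntegral F B := IsIntegral.of_finite F B
  have hdvd : minpoly F B ∣ f.comp g := minpoly.dvd F B hroot
  have hdegm : (minpoly F B).natDegree ≤ d := by
    have h := minpoly.natDegree_le (A := F) B
    rwa [(AdjoinRoot.powerBasis hfd).finrank, AdjoinRoot.powerBasis_dim, hf] at h
  have hmpos : 0 < (minpoly F B).natDegree := minpoly.natDegree_pos hint
  have H : Irreducible (f.comp g) := hcomp g (by omega) (le_of_eq hgdeg)
  have hcompdeg : (f.comp g).natDegree = d * (d - 1) := by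
    rw [natDegree_comp, hf, hgdeg]
  obtain ⟨q, hq⟩ := hdvd
  have hm0 : minpoly F B ≠ 0 := minpoly.ne_zero hint
  have hq0 : q ≠ 0 := by
    rintro rfl
    rw [mul_zero] at hq
    exact H.ne_zero hq
  have hdeg : d * (d - 1) = (minpoly F B).natDegree + q.natDegree := by
    rw [← hcompdeg, hq, natDegree_mul hm0 hq0]
  rcases H.isUnit_or_isUnit hq with h | h
  · have := natDegree_eq_zero_of_isUnit h
    omega
  · have hq1 := natDegree_eq_zero_of_isUnit h
    have h2d : d * 2 ≤ d * (d - 1) := Nat.mul_le_mul_left d (by omega)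
    omega
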